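/- For all reals u ≥ 0 and ξ ≥ 0, the supremum over all real t < 1/2 of the quantity u·t − ξ·t/(1 − 2t) equals (√u − √ξ)²/2. -/

import Mathlib

open Real

/-- Fenchel–Legendre transform of `t ↦ ξ t / (1 - 2 t)` (for `t < 1/2`):
the rate function of the normalized Stage-1 signal statistic of OTSS. -/
theorem fenchel_legendre_noncentral_chi_squared (u ξ : ℝ) (hu : 0 ≤ u) (hξ : 0 ≤ ξ) :
    sSup {y : ℝ | ∃ t : ℝ, t < 1 / 2 ∧ y = u * t - ξ * t / (1 - 2 * t)}
      = (Real.sqrt u - Real.sqrt ξ) ^ 2 / 2 := by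
  have hsu := Real.sq_sqrt hu
  have hsξ := Real.sq_sqrt hξ
  have hsnu := Real.sqrt_nonneg u
  have hsnξ := Real.sqrt_nonneg ξ
  have key : ∀ t : ℝ, t < 1 / 2 →
      u * t - ξ * t / (1 - 2 * t)
        = (u + ξ) / 2 - (u * (1 - 2 * t) + ξ / (1 - 2 * t)) / 2 := by
    intro t ht
    have hs : (0 : ℝ) < 1 - 2 * t := by linarith
    have hinv : (1 - 2 * t) * (1 - 2 * t)⁻¹ = 1 := mul_inv_cancel₀ hs.ne'
    simp only [div_eq_mul_inv]
    linear_combination (ξ / 2) * hinv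
  apply csSup_eq_of_forall_le_of_forall_lt_exists_gt
  · exact ⟨u * 0 - ξ * 0 / (1 - 2 * 0), 0, by norm_num, rfl⟩
  · rintro y ⟨t, ht, rfl⟩
    rw [key t ht]
    have hs : (0 : ℝ) < 1 - 2 * t := by linarith
    have hb : 2 * Real.sqrt u * Real.sqrt ξ ≤ u * (1 - 2 * t) + ξ / (1 - 2 * t) := by
      rw [← sub_nonneg]
      have heq : u * (1 - 2 * t) + ξ / (1 - 2 * t) - 2 * Real.sqrt u * Real.sqrt ξ
          = (u * (1 - 2 * t) ^ 2 - 2 * Real.sqrt u * Real.sqrt ξ * (1 - 2 * t) + ξ)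
            / (1 - 2 * t) := by
        field_simp
        ring
      rw [heq]
      apply div_nonneg _ hs.le
      nlinarith [sq_nonneg (Real.sqrt u * (1 - 2 * t) - Real.sqrt ξ)]
    nlinarith
  · intro w hw
    have hc0 : 2 * Real.sqrt u * Real.sqrt ξ < u + ξ - 2 * w := by nlinarith
    have hcpos : 0 < u + ξ - 2 * w := by nlinarith [mul_nonneg hsnu hsnξ]
    obtain ⟨s, hs, hlt⟩ : ∃ s : ℝ, 0 < s ∧ u * s + ξ / s < u + ξ - 2 * w := by
      rcases eq_or_lt_of_le hu with h | hupos
      · subst h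
        refine ⟨ξ / (0 + ξ - 2 * w) + 1, by positivity, ?_⟩
        have hspos : (0:ℝ) < ξ / (0 + ξ - 2 * w) + 1 := by positivity
        rw [zero_mul, zero_add, div_lt_iff₀ hspos]
        have : ξ / (0 + ξ - 2 * w) * (0 + ξ - 2 * w) = ξ := div_mul_cancel₀ ξ (ne_of_gt hcpos)
        nlinarith
      · rcases eq_or_lt_of_le hξ with h | hξpos
        · subst h
          refine ⟨(u + 0 - 2 * w) / (2 * u), by positivity, ?_⟩
          have : u * ((u + 0 - 2 * w) / (2 * u)) = (u + 0 - 2 * w) / 2 := by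
            field_simp
          rw [this, zero_div, add_zero]
          linarith
        · have h1 : 0 < Real.sqrt u := Real.sqrt_pos.mpr hupos
          have h2 : 0 < Real.sqrt ξ := Real.sqrt_pos.mpr hξpos
          refine ⟨Real.sqrt ξ / Real.sqrt u, by positivity, ?_⟩
          have e1 : u * (Real.sqrt ξ / Real.sqrt u) = Real.sqrt u * Real.sqrt ξ := by
            rw [mul_div_assoc', div_eq_iff h1.ne']; linear_combination (-Real.sqrt ξ) * hsu
          have e2 : ξ / (Real.sqrt ξ / Real.sqrt u) = Real.sqrt u * Real.sqrt ξ := by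
            rw [div_div_eq_mul_div, div_eq_iff h2.ne']; linear_combination (-Real.sqrt u) * hsξ
          rw [e1, e2]
          linarith
    refine ⟨u * ((1 - s) / 2) - ξ * ((1 - s) / 2) / (1 - 2 * ((1 - s) / 2)),
      ⟨(1 - s) / 2, by linarith, rfl⟩, ?_⟩
    rw [key _ (by linarith)]
    have hss : 1 - 2 * ((1 - s) / 2) = s := by ring
    rw [hss]
    linarith
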